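/- For any singular transformation a of {1,...,n}, the subsemigroup generated by the set of conjugates {g⁻¹ag : g ∈ S_n} is generated by idempotents. -/

import Mathlib

/-- The full transformation monoid on `{1,...,n}`, modeled as `Function.End (Fin n)`
(multiplication is composition). -/
abbrev Tn (n : ℕ) := Function.End (Fin n)

/-- A permutation viewed as a transformation. -/
def ofPerm {n : ℕ} (g : Equiv.Perm (Fin n)) : Tn n := ⇑g

/-- The rank of a transformation: the size of its image. -/
def rnk {n : ℕ} (a : Tn n) : ℕ := (Finset.univ.image a).card

/-- The symmetric group embedded in `Tn n` as a set. -/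
def perms (n : ℕ) : Set (Tn n) := Set.range (fun g : Equiv.Perm (Fin n) => ofPerm g)

/-- The `S_n`-conjugacy class of a transformation. -/
def conjClass {n : ℕ} (t : Tn n) : Set (Tn n) :=
  {s | ∃ g : Equiv.Perm (Fin n), s = ofPerm g⁻¹ * t * ofPerm g}

namespace Aux
variable {n : ℕ}

lemma mul_apply (f g : Tn n) (x : Fin n) : (f * g) x = f (g x) := rfl

lemma ofPerm_apply (g : Equiv.Perm (Fin n)) (x : Fin n) : ofPerm g x = g x := rfl

lemma ofPerm_mul (g h : Equiv.Perm (Fin n)) : ofPerm (g * h) = ofPerm g * ofPerm h := rfl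

lemma ofPerm_one : ofPerm (1 : Equiv.Perm (Fin n)) = 1 := rfl

/-- extend an injective-on-s map to a permutation -/
lemma exists_perm_extend (s : Finset (Fin n)) (φ : Fin n → Fin n)
    (hinj : Set.InjOn φ ↑s) : ∃ g : Equiv.Perm (Fin n), ∀ x ∈ s, g x = φ x := by
  classical
  set t := s.image φ with ht
  have hcard : t.card = s.card := Finset.card_image_of_injOn hinj
  have hbij : Function.Bijective (fun x : {x // x ∈ s} => (⟨φ x, Finset.mem_image_of_mem φ x.2⟩ : {x // x ∈ t})) := by
    constructor
    · rintro ⟨x, hx⟩ ⟨y, hy⟩ hxy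
      simp only [Subtype.mk.injEq] at hxy
      exact Subtype.ext (hinj hx hy hxy)
    · rintro ⟨y, hy⟩
      obtain ⟨x, hx, rfl⟩ := Finset.mem_image.mp hy
      exact ⟨⟨x, hx⟩, rfl⟩

  have hc2 : Fintype.card {x // ¬ x ∈ s} = Fintype.card {x // ¬ x ∈ t} := by
    simp only [Fintype.card_subtype_compl, Fintype.card_coe, hcard]
  have e2 : {x // ¬ x ∈ s} ≃ {x // ¬ x ∈ t} := Fintype.equivOfCardEq hc2
  refine ⟨Equiv.subtypeCongr (Equiv.ofBijective _ hbij) e2, ?_⟩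
  intro x hx
  simp [Equiv.subtypeCongr, Equiv.ofBijective, hx]

/-- a permutation carrying s exactly onto t, given equal cards -/
lemma exists_perm_mapsTo (s t : Finset (Fin n)) (h : s.card = t.card) :
    ∃ g : Equiv.Perm (Fin n), ∀ x, x ∈ s ↔ g x ∈ t := by
  classical
  have h' : Fintype.card {x // x ∈ s} = Fintype.card {x // x ∈ t} := by
    simpa [Fintype.card_coe] using h
  set ψ : Fin n → Fin n := fun x => if hx : x ∈ s then ↑(Fintype.equivOfCardEq h' ⟨x, hx⟩) else x with hψ
  have hinj : Set.InjOn ψ ↑s := by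
    intro x hx y hy hxy
    simp only [Finset.coe_mem, Finset.mem_coe] at hx hy
    simp only [hψ, dif_pos hx, dif_pos hy] at hxy
    have := (Fintype.equivOfCardEq h').injective (Subtype.ext hxy)
    exact congrArg Subtype.val this
  obtain ⟨g, hg⟩ := exists_perm_extend s ψ hinj
  have hmem : ∀ x ∈ s, g x ∈ t := by
    intro x hx
    rw [hg x hx, hψ]
    simp only [dif_pos hx]
    exact (Fintype.equivOfCardEq h' ⟨x, hx⟩).2
  have himage : s.image g = t := by
    apply Finset.eq_of_subset_of_card_le
    · intro y hy
      obtain ⟨x, hx, rfl⟩ := Finset.mem_image.mp hy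
      exact hmem x hx
    · rw [Finset.card_image_of_injective _ g.injective, h]
  refine ⟨g, fun x => ⟨fun hx => hmem x hx, fun hx => ?_⟩⟩
  by_contra hxs
  rw [← himage] at hx
  obtain ⟨x', hx', hxx⟩ := Finset.mem_image.mp hx
  exact hxs (g.injective hxx ▸ hx')

lemma closure_conj {S : Set (Tn n)}
    (hS : ∀ x ∈ S, ∀ g : Equiv.Perm (Fin n), ofPerm g⁻¹ * x * ofPerm g ∈ S) :
    ∀ x ∈ Subsemigroup.closure S, ∀ g : Equiv.Perm (Fin n),
      ofPerm g⁻¹ * x * ofPerm g ∈ Subsemigroup.closure S := by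
  intro x hx
  induction hx using Subsemigroup.closure_induction with
  | mem y hy => exact fun g => Subsemigroup.subset_closure (hS y hy g)
  | mul y z _ _ hy hz =>
    intro g
    have key : ofPerm g⁻¹ * (y * z) * ofPerm g
        = (ofPerm g⁻¹ * y * ofPerm g) * (ofPerm g⁻¹ * z * ofPerm g) := by
      funext w
      simp [mul_apply, ofPerm_apply]
    rw [key]
    exact Subsemigroup.mul_mem _ (hy g) (hz g)

/-- Key Lemma: an idempotent of the form (perm) * c with c in a conjugation-closed
subsemigroup lies in that subsemigroup. -/
lemma KL (S : Subsemigroup (Tn n))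
    (hS : ∀ x ∈ S, ∀ g : Equiv.Perm (Fin n), ofPerm g⁻¹ * x * ofPerm g ∈ S)
    (p : Equiv.Perm (Fin n)) (c : Tn n) (hc : c ∈ S) (f : Tn n) (hf : f * f = f)
    (hfe : f = ofPerm p * c) : f ∈ S := by
  have canc : ∀ (q : Equiv.Perm (Fin n)) (x : Tn n), ofPerm q * (ofPerm q⁻¹ * x) = x := by
    intro q x; funext w; simp [mul_apply, ofPerm_apply]
  have key : ∀ m : ℕ, ∃ s ∈ S, (ofPerm p * c) ^ (m + 1) = ofPerm (p ^ (m + 1)) * s := by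
    intro m
    induction m with
    | zero => exact ⟨c, hc, by rw [pow_one, pow_one]⟩
    | succ m ih =>
      obtain ⟨s, hs, hseq⟩ := ih
      refine ⟨(ofPerm p⁻¹ * s * ofPerm p) * c, Subsemigroup.mul_mem _ ?_ hc, ?_⟩
      · exact hS s hs p
      · have h2 : ofPerm (p ^ (m + 1 + 1)) * ofPerm p⁻¹ = ofPerm (p ^ (m + 1)) := by
          rw [← ofPerm_mul, pow_succ, mul_inv_cancel_right]
        rw [pow_succ, hseq]
        simp only [← mul_assoc]
        rw [h2]
  have hk : 0 < orderOf p := orderOf_pos p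
  obtain ⟨k, hkk⟩ : ∃ k, orderOf p = k + 1 := ⟨orderOf p - 1, by omega⟩
  have hfpow : ∀ m : ℕ, f ^ (m + 1) = f := by
    intro m; induction m with
    | zero => rw [pow_one]
    | succ m ih => rw [pow_succ, ih, hf]
  obtain ⟨s, hs, hseq⟩ := key k
  have : f = s := by
    rw [← hfpow k, hfe, hseq, ← hkk, pow_orderOf_eq_one, ofPerm_one, one_mul]
  rw [this]; exact hs

/-- Modify a permutation at one fixed point of e, keeping values elsewhere on Fix(e). -/
lemma modify (e : Tn n) (q : Equiv.Perm (Fin n)) (t₀ v : Fin n) (ht₀ : e t₀ = t₀)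
    (hv : ∀ t, e t = t → t ≠ t₀ → q t ≠ v) :
    ∃ q' : Equiv.Perm (Fin n), q' t₀ = v ∧ ∀ t, e t = t → t ≠ t₀ → q' t = q t := by
  classical
  set F : Finset (Fin n) := Finset.univ.filter (fun t => e t = t) with hF
  have hFmem : ∀ t, t ∈ F ↔ e t = t := by intro t; simp [hF]
  set φ : Fin n → Fin n := fun t => if t = t₀ then v else q t with hφ
  have hinj : Set.InjOn φ ↑F := by
    intro x hx y hy hxy
    simp only [Finset.mem_coe, hFmem] at hx hy
    by_cases hx0 : x = t₀ <;> by_cases hy0 : y = t₀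
    · rw [hx0, hy0]
    · exact absurd (by simpa [hφ, hx0, hy0] using hxy.symm) (hv y hy hy0)
    · exact absurd (by simpa [hφ, hx0, hy0] using hxy) (hv x hx hx0)
    · exact q.injective (by simpa [hφ, hx0, hy0] using hxy)
  obtain ⟨g, hg⟩ := exists_perm_extend F φ hinj
  refine ⟨g, ?_, ?_⟩
  · rw [hg t₀ ((hFmem t₀).2 ht₀)]; simp [hφ]
  · intro t ht htne
    rw [hg t ((hFmem t).2 ht)]; simp [hφ, htne]

/-- The step lemma: peel one idempotent conjugate of e off `q ∘ e`. -/
lemma stepLemma (S : Subsemigroup (Tn n))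
    (hS : ∀ x ∈ S, ∀ g : Equiv.Perm (Fin n), ofPerm g⁻¹ * x * ofPerm g ∈ S)
    (e : Tn n) (he : e * e = e) (heS : e ∈ S) (u : Fin n) (hu : e u ≠ u)
    (q q' : Equiv.Perm (Fin n)) (t₀ : Fin n) (ht₀ : e t₀ = t₀)
    (hq' : ∀ t, e t = t → t ≠ t₀ → q' t = q t)
    (hz : ∀ t, e t = t → q t ≠ q' t₀) :
    ∃ f : Tn n, (f * f = f ∧ f ∈ S) ∧ ofPerm q * e = f * (ofPerm q' * e) := by
  classical
  have hee : ∀ y, e (e y) = e y := by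
    intro y
    have := congrFun he y
    exact this
  set F : Finset (Fin n) := Finset.univ.filter (fun t => e t = t) with hF
  have hFmem : ∀ t, t ∈ F ↔ e t = t := by intro t; simp [hF]
  have ht₀F : t₀ ∈ F := (hFmem t₀).2 ht₀
  set t₁ : Fin n := e u with ht₁
  have ht₁F : t₁ ∈ F := (hFmem t₁).2 (hee u)
  have huF : u ∉ F := fun h => hu ((hFmem u).1 h)
  set Bset : Finset (Fin n) := insert (q t₀) ((F.erase t₀).image q) with hB
  have hqt₀B : q t₀ ∈ Bset := Finset.mem_insert_self _ _
  have hzB : q' t₀ ∉ Bset := by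
    intro h
    rcases Finset.mem_insert.mp h with h | h
    · exact hz t₀ ht₀ h.symm
    · obtain ⟨t, htm, hte⟩ := Finset.mem_image.mp h
      obtain ⟨htne, htF⟩ := Finset.mem_erase.mp htm
      exact hz t ((hFmem t).1 htF) hte
  have hcardB : Bset.card = F.card := by
    have h1 : q t₀ ∉ (F.erase t₀).image q := by
      intro h
      obtain ⟨t, htm, hte⟩ := Finset.mem_image.mp h
      exact (Finset.mem_erase.mp htm).1 (q.injective hte)
    rw [hB, Finset.card_insert_of_notMem h1,
      Finset.card_image_of_injective _ q.injective,
      Finset.card_erase_of_mem ht₀F]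
    have : 0 < F.card := Finset.card_pos.mpr ⟨t₀, ht₀F⟩
    omega
  obtain ⟨g₀, hg₀⟩ := exists_perm_mapsTo Bset F hcardB
  set g : Equiv.Perm (Fin n) :=
    (Equiv.swap (g₀ (q t₀)) t₁ * Equiv.swap (g₀ (q' t₀)) u) * g₀ with hg
  have hgapp : ∀ x, g x = Equiv.swap (g₀ (q t₀)) t₁ (Equiv.swap (g₀ (q' t₀)) u (g₀ x)) := by
    intro x; rfl
  have hw0 : g₀ (q t₀) ∈ F := (hg₀ _).1 hqt₀B
  have hz0 : g₀ (q' t₀) ∉ F := fun h => hzB ((hg₀ _).2 h)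
  have hgB : ∀ b ∈ Bset, g b ∈ F := by
    intro b hb
    have hb1 : g₀ b ∈ F := (hg₀ _).1 hb
    have hne1 : g₀ b ≠ g₀ (q' t₀) := fun h => hzB (g₀.injective h ▸ hb)
    have hne2 : g₀ b ≠ u := fun h => huF (h ▸ hb1)
    rw [hgapp, Equiv.swap_apply_of_ne_of_ne hne1 hne2]
    rcases eq_or_ne (g₀ b) (g₀ (q t₀)) with h | h
    · rw [h, Equiv.swap_apply_left]; exact ht₁F
    · rcases eq_or_ne (g₀ b) t₁ with h2 | h2
      · rw [h2, Equiv.swap_apply_right]; exact hw0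
      · rw [Equiv.swap_apply_of_ne_of_ne h h2]; exact hb1
  have hgw : g (q t₀) = t₁ := by
    have hne1 : g₀ (q t₀) ≠ g₀ (q' t₀) := fun h => hz t₀ ht₀ (g₀.injective h)
    have hne2 : g₀ (q t₀) ≠ u := fun h => huF (h ▸ hw0)
    rw [hgapp, Equiv.swap_apply_of_ne_of_ne hne1 hne2, Equiv.swap_apply_left]
  have hgz : g (q' t₀) = u := by
    have hne1 : u ≠ g₀ (q t₀) := fun h => huF (h ▸ hw0)
    have hne2 : u ≠ t₁ := fun h => huF (h ▸ ht₁F)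
    rw [hgapp, Equiv.swap_apply_left, Equiv.swap_apply_of_ne_of_ne hne1 hne2]
  refine ⟨ofPerm g⁻¹ * e * ofPerm g, ⟨?_, hS e heS g⟩, ?_⟩
  · funext x
    simp only [mul_apply, ofPerm_apply, Equiv.apply_symm_apply, Equiv.Perm.coe_inv]
    rw [hee]
  · funext x
    simp only [mul_apply, ofPerm_apply]
    have htF : e x ∈ F := (hFmem _).2 (hee x)
    set t : Fin n := e x with htdef
    rcases eq_or_ne t t₀ with h | h
    · rw [h, hgz]
      have he_u : e u = t₁ := rfl
      rw [he_u, ← hgw, Equiv.Perm.coe_inv, Equiv.symm_apply_apply]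
    · rw [hq' t ((hFmem t).1 htF) h]
      have hqtB : q t ∈ Bset := Finset.mem_insert_of_mem
        (Finset.mem_image_of_mem q (Finset.mem_erase.mpr ⟨h, htF⟩))
      rw [(hFmem _).1 (hgB _ hqtB), Equiv.Perm.coe_inv, Equiv.symm_apply_apply]

open Classical in
lemma mainP (S : Subsemigroup (Tn n))
    (hS : ∀ x ∈ S, ∀ g : Equiv.Perm (Fin n), ofPerm g⁻¹ * x * ofPerm g ∈ S)
    (e : Tn n) (he : e * e = e) (heS : e ∈ S) (u : Fin n) (hu : e u ≠ u) :
    ∀ (k : ℕ) (q : Equiv.Perm (Fin n)),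
      (Finset.univ.filter (fun t => e t = t ∧ q t ≠ t)).card ≤ k →
      ofPerm q * e ∈ Subsemigroup.closure {x : Tn n | x * x = x ∧ x ∈ S} := by
  classical
  have heE : e ∈ ({x : Tn n | x * x = x ∧ x ∈ S} : Set (Tn n)) := ⟨he, heS⟩
  have hbase : ∀ q : Equiv.Perm (Fin n),
      (Finset.univ.filter (fun t => e t = t ∧ q t ≠ t)).card = 0 →
      ofPerm q * e = e := by
    intro q hq
    have hemp := Finset.card_eq_zero.mp hq
    funext x
    have hfix : e (e x) = e x := congrFun he x
    have hnot : ¬ (e (e x) = e x ∧ q (e x) ≠ e x) := by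
      intro hcon
      have : e x ∈ Finset.univ.filter (fun t => e t = t ∧ q t ≠ t) := by
        simp only [Finset.mem_filter, Finset.mem_univ, true_and]
        exact hcon
      rw [hemp] at this; exact absurd this (Finset.notMem_empty _)
    push_neg at hnot
    exact (mul_apply _ _ _).trans (hnot hfix)
  have hcex : ∀ q : Equiv.Perm (Fin n), ∃ c, ∀ t, e t = t → q t ≠ c := by
    intro q
    by_contra hcon
    push_neg at hcon
    have hsub : (Finset.univ : Finset (Fin n)) ⊆
        (Finset.univ.filter (fun t => e t = t)).image q := by
      intro c _
      obtain ⟨t, ht, hqt⟩ := hcon c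
      exact Finset.mem_image.mpr ⟨t, by simp [ht], hqt⟩
    have h1 := Finset.card_le_card hsub
    have h2 : ((Finset.univ.filter (fun t => e t = t)).image q).card
        ≤ (Finset.univ.filter (fun t => e t = t)).card := Finset.card_image_le
    have h3 : (Finset.univ.filter (fun t => e t = t)) ⊆ Finset.univ.erase u := by
      intro t ht
      refine Finset.mem_erase.mpr ⟨?_, Finset.mem_univ _⟩
      rintro rfl
      simp only [Finset.mem_filter, Finset.mem_univ, true_and] at ht
      exact hu ht
    have h4 := Finset.card_le_card h3
    rw [Finset.card_erase_of_mem (Finset.mem_univ u)] at h4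
    have h5 : 0 < (Finset.univ : Finset (Fin n)).card :=
      Finset.card_pos.mpr ⟨u, Finset.mem_univ u⟩
    omega
  have hnf : ∀ (q q' : Equiv.Perm (Fin n)) (t₀ : Fin n), e t₀ = t₀ → q t₀ ≠ t₀ →
      q' t₀ = t₀ → (∀ t, e t = t → t ≠ t₀ → q' t = q t) →
      (Finset.univ.filter (fun t => e t = t ∧ q' t ≠ t)).card
        = (Finset.univ.filter (fun t => e t = t ∧ q t ≠ t)).card - 1 := by
    intro q q' t₀ h1 h2 h3 h4
    have hseteq : Finset.univ.filter (fun t => e t = t ∧ q' t ≠ t)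
        = (Finset.univ.filter (fun t => e t = t ∧ q t ≠ t)).erase t₀ := by
      ext t
      simp only [Finset.mem_filter, Finset.mem_erase, Finset.mem_univ, true_and]
      constructor
      · rintro ⟨ht, hqt⟩
        have htne : t ≠ t₀ := by rintro rfl; exact hqt h3
        exact ⟨htne, ht, by rw [← h4 t ht htne]; exact hqt⟩
      · rintro ⟨htne, ht, hqt⟩
        exact ⟨ht, by rw [h4 t ht htne]; exact hqt⟩
    have hmemt : t₀ ∈ Finset.univ.filter (fun t => e t = t ∧ q t ≠ t) := by
      simp only [Finset.mem_filter, Finset.mem_univ, true_and]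
      exact ⟨h1, h2⟩
    rw [hseteq, Finset.card_erase_of_mem hmemt]
  have hnfle : ∀ (q q' : Equiv.Perm (Fin n)) (t₀ : Fin n),
      (∀ t, e t = t → t ≠ t₀ → q' t = q t) → q t₀ ≠ t₀ →
      (Finset.univ.filter (fun t => e t = t ∧ q' t ≠ t)).card
        ≤ (Finset.univ.filter (fun t => e t = t ∧ q t ≠ t)).card := by
    intro q q' t₀ h4 hq0
    apply Finset.card_le_card
    intro t ht
    simp only [Finset.mem_filter, Finset.mem_univ, true_and] at ht ⊢
    obtain ⟨ht1, ht2⟩ := ht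
    refine ⟨ht1, ?_⟩
    rcases eq_or_ne t t₀ with rfl | hne
    · exact hq0
    · rw [← h4 t ht1 hne]; exact ht2
  intro k
  induction k with
  | zero =>
    intro q hq
    rw [hbase q (Nat.le_zero.mp hq)]
    exact Subsemigroup.subset_closure heE
  | succ k ih =>
    intro q hq
    rcases Nat.eq_zero_or_pos
        ((Finset.univ.filter (fun t => e t = t ∧ q t ≠ t)).card) with h0 | h0
    · rw [hbase q h0]; exact Subsemigroup.subset_closure heE
    by_cases hA : ∃ ts, (e ts = ts ∧ q ts ≠ ts) ∧ ∀ t, e t = t → t ≠ ts → q t ≠ ts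
    · obtain ⟨ts, ⟨hts1, hts2⟩, hts3⟩ := hA
      obtain ⟨qA, hqA1, hqA2⟩ := modify e q ts ts hts1 hts3
      have hzc : ∀ t, e t = t → q t ≠ qA ts := by
        intro t ht
        rw [hqA1]
        rcases eq_or_ne t ts with rfl | hne
        · exact hts2
        · exact hts3 t ht hne
      obtain ⟨f, ⟨hf1, hf2⟩, hfeq⟩ := stepLemma S hS e he heS u hu q qA ts hts1 hqA2 hzc
      rw [hfeq]
      refine Subsemigroup.mul_mem _ (Subsemigroup.subset_closure ⟨hf1, hf2⟩) (ih qA ?_)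
      have := hnf q qA ts hts1 hts2 hqA1 hqA2
      omega
    · push_neg at hA
      obtain ⟨ts, hts⟩ := Finset.card_pos.mp h0
      simp only [Finset.mem_filter, Finset.mem_univ, true_and] at hts
      obtain ⟨hts1, hts2⟩ := hts
      obtain ⟨tp, htp1, htp2, htp3⟩ := hA ts ⟨hts1, hts2⟩
      obtain ⟨c, hc⟩ := hcex q
      have hvB : ∀ t, e t = t → t ≠ tp → q t ≠ c := fun t ht _ => hc t ht
      obtain ⟨qB, hqB1, hqB2⟩ := modify e q tp c htp1 hvB
      have hzcB : ∀ t, e t = t → q t ≠ qB tp := by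
        intro t ht; rw [hqB1]; exact hc t ht
      obtain ⟨fB, ⟨hfB1, hfB2⟩, hfBeq⟩ :=
        stepLemma S hS e he heS u hu q qB tp htp1 hqB2 hzcB
      have htsne : ts ≠ tp := by rintro rfl; exact hts2 htp3
      have hqBts : qB ts = q ts := hqB2 ts hts1 htsne
      have hA2 : ∀ t, e t = t → t ≠ ts → qB t ≠ ts := by
        intro t ht htne
        rcases eq_or_ne t tp with rfl | hne
        · rw [hqB1]
          intro hcts
          exact hc t htp1 (htp3.trans hcts.symm)
        · rw [hqB2 t ht hne]
          intro hqt
          exact hne (q.injective (hqt.trans htp3.symm))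
      have hts2B : qB ts ≠ ts := by rw [hqBts]; exact hts2
      obtain ⟨qC, hqC1, hqC2⟩ := modify e qB ts ts hts1 hA2
      have hzc2 : ∀ t, e t = t → qB t ≠ qC ts := by
        intro t ht; rw [hqC1]
        rcases eq_or_ne t ts with rfl | hne
        · exact hts2B
        · exact hA2 t ht hne
      obtain ⟨fA, ⟨hfA1, hfA2⟩, hfAeq⟩ :=
        stepLemma S hS e he heS u hu qB qC ts hts1 hqC2 hzc2
      rw [hfBeq, hfAeq]
      have hcard1 := hnf qB qC ts hts1 hts2B hqC1 hqC2
      have hqtpne : q tp ≠ tp := by rw [htp3]; exact fun h => htsne h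
      have hcard2 := hnfle q qB tp hqB2 hqtpne
      refine Subsemigroup.mul_mem _ (Subsemigroup.subset_closure ⟨hfB1, hfB2⟩)
        (Subsemigroup.mul_mem _ (Subsemigroup.subset_closure ⟨hfA1, hfA2⟩) (ih qC ?_))
      omega

end Aux
open Aux in
/-- For singular `a`, the semigroup generated by the `S_n`-conjugates of `a` is
idempotent generated. -/
theorem stmt12 (n : ℕ) (a : Tn n) (ha : ¬ Function.Bijective a) :
    ∃ E : Set (Tn n), (∀ x ∈ E, x * x = x) ∧
      Subsemigroup.closure (conjClass a) = Subsemigroup.closure E := by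
  classical
  rcases Nat.eq_zero_or_pos n with rfl | hn
  · exact absurd ⟨fun x y h => x.elim0, fun y => y.elim0⟩ ha
  have hne : Nonempty (Fin n) := ⟨⟨0, hn⟩⟩
  set N := Subsemigroup.closure (conjClass a) with hNdef
  -- conjClass is closed under conjugation
  have hS0 : ∀ x ∈ conjClass a, ∀ g : Equiv.Perm (Fin n),
      ofPerm g⁻¹ * x * ofPerm g ∈ conjClass a := by
    rintro x ⟨h, rfl⟩ g
    refine ⟨h * g, ?_⟩
    funext w
    simp [mul_apply, ofPerm_apply]
  have hN : ∀ x ∈ N, ∀ g : Equiv.Perm (Fin n), ofPerm g⁻¹ * x * ofPerm g ∈ N :=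
    closure_conj hS0
  have haC : a ∈ conjClass a := by
    refine ⟨1, ?_⟩
    rw [inv_one, ofPerm_one, one_mul, mul_one]
  have haN : a ∈ N := Subsemigroup.subset_closure haC
  -- the idempotent e = invFun a ∘ a
  set e : Tn n := fun x => Function.invFun a (a x) with hedef
  have hinva : ∀ x, a (Function.invFun a (a x)) = a x :=
    fun x => Function.invFun_eq ⟨x, rfl⟩
  have he : e * e = e := by
    funext x
    show Function.invFun a (a (Function.invFun a (a x))) = Function.invFun a (a x)
    rw [hinva x]
  -- a permutation p with e = p ∘ a
  have hinj : Set.InjOn (Function.invFun a) ↑(Finset.univ.image a) := by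
    intro y1 hy1 y2 hy2 hy
    have h1 : a (Function.invFun a y1) = y1 := by
      obtain ⟨x, _, rfl⟩ := Finset.mem_image.mp (Finset.mem_coe.mp hy1)
      exact hinva x
    have h2 : a (Function.invFun a y2) = y2 := by
      obtain ⟨x, _, rfl⟩ := Finset.mem_image.mp (Finset.mem_coe.mp hy2)
      exact hinva x
    rw [← h1, ← h2, hy]
  obtain ⟨p, hp⟩ := exists_perm_extend (Finset.univ.image a) (Function.invFun a) hinj
  have hpa : ∀ x, e x = p (a x) := by
    intro x
    rw [hp (a x) (Finset.mem_image_of_mem a (Finset.mem_univ x))]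
  have hepa : e = ofPerm p * a := by
    funext x
    exact hpa x
  have heN : e ∈ N := KL N hN p a haN e he hepa
  -- e has a non-fixed point
  have hu : ∃ u, e u ≠ u := by
    by_contra hcon
    push_neg at hcon
    apply ha
    refine (Finite.injective_iff_bijective (f := a)).mp ?_
    intro x y hxy
    have hx := hcon x
    have hy := hcon y
    rw [hedef] at hx hy
    simp only at hx hy
    rw [← hx, ← hy, hxy]
  obtain ⟨u, hu⟩ := hu
  -- a = p⁻¹ ∘ e
  have hap : a = ofPerm p⁻¹ * e := by
    funext x
    show a x = p⁻¹ (e x)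
    rw [hpa x, Equiv.Perm.coe_inv, Equiv.symm_apply_apply]
  -- the set of idempotents of N
  refine ⟨{x : Tn n | x * x = x ∧ x ∈ N}, fun x hx => hx.1, le_antisymm ?_ ?_⟩
  · -- closure (conjClass a) ≤ closure E
    rw [hNdef] at *
    apply Subsemigroup.closure_le.mpr
    have haE : a ∈ Subsemigroup.closure {x : Tn n | x * x = x ∧ x ∈ N} := by
      rw [hap]
      exact mainP N hN e he heN u hu
        _ p⁻¹ le_rfl
    have hEconj : ∀ x ∈ {x : Tn n | x * x = x ∧ x ∈ N},
        ∀ g : Equiv.Perm (Fin n), ofPerm g⁻¹ * x * ofPerm g ∈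
          {x : Tn n | x * x = x ∧ x ∈ N} := by
      rintro x ⟨hx1, hx2⟩ g
      refine ⟨?_, hN x hx2 g⟩
      funext w
      have hxx : ∀ y, x (x y) = x y := fun y => congrFun hx1 y
      simp [mul_apply, ofPerm_apply, hxx]
    rintro x ⟨g, rfl⟩
    exact closure_conj hEconj a haE g
  · -- closure E ≤ closure (conjClass a) = N
    apply Subsemigroup.closure_le.mpr
    exact fun x hx => hx.2
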